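/- Let G be a directed graph, and V_I, V_J, V_Z disjoint subsets of its vertices. Let V' be the set of all ancestors of V_I ∪ V_J ∪ V_Z (a node is an ancestor of a set if it equals a member or there is a directed chain from it to a member), and let G' be the restriction of G to V'. Then V_Z d-separates V_I and V_J in G if and only if V_Z d-separates V_I and V_J in G'. -/

import Mathlib

/-- `b` is a descendant of `a` (a node is a descendant of itself). -/
def Desc {V : Type*} (E : V → V → Prop) (a b : V) : Prop :=
  Relation.ReflTransGen E a b

/-- The set of ancestors of a set `S` (a node is an ancestor of a set if it equals a member
or there is a directed chain from it to a member). -/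
def Anc {V : Type*} (E : V → V → Prop) (S : Set V) : Set V :=
  {x | ∃ s ∈ S, Relation.ReflTransGen E x s}

/-- `p` is a path from `i` to `j`: a sequence of at least two nodes, consecutive nodes
joined by an edge in either direction, with distinct ordered pairs of consecutive nodes. -/
def IsPath {V : Type*} (E : V → V → Prop) (i j : V) (p : List V) : Prop :=
  p.head? = some i ∧ p.getLast? = some j ∧ 2 ≤ p.length ∧
  (∀ (k : ℕ) (a b : V), p[k]? = some a → p[k + 1]? = some b → (E a b ∨ E b a)) ∧
  (p.zip p.tail).Nodup

/-- The path `p` is blocked by `Z`: it has an internal node that is a non-collider in `Z`,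
or a collider none of whose descendants (including itself) lies in `Z`. -/
def Blocked {V : Type*} (E : V → V → Prop) (Z : Set V) (p : List V) : Prop :=
  ∃ (k : ℕ) (a b c : V), p[k]? = some a ∧ p[k + 1]? = some b ∧ p[k + 2]? = some c ∧
    ((b ∈ Z ∧ ¬(E a b ∧ E c b)) ∨ ((E a b ∧ E c b) ∧ ∀ d, Desc E b d → d ∉ Z))

/-- `Z` d-separates `I` and `J`: every path between a node of `I` and a node of `J`
is blocked by `Z`. -/
def DSep {V : Type*} (E : V → V → Prop) (I Z J : Set V) : Prop :=
  ∀ i ∈ I, ∀ j ∈ J, ∀ p : List V, IsPath E i j p → Blocked E Z p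

section Aux

variable {V : Type*} {E : V → V → Prop} {S : Set V}

lemma anc_step {x y : V} (hxy : E x y) (hy : y ∈ Anc E S) : x ∈ Anc E S := by
  obtain ⟨s, hs, h⟩ := hy
  exact ⟨s, hs, Relation.ReflTransGen.head hxy h⟩

lemma anc_rtg {x y : V} (hxy : Relation.ReflTransGen E x y) (hy : y ∈ Anc E S) :
    x ∈ Anc E S := by
  obtain ⟨s, hs, h⟩ := hy
  exact ⟨s, hs, hxy.trans h⟩

lemma mem_anc_self {x : V} (hx : x ∈ S) : x ∈ Anc E S := ⟨x, hx, Relation.ReflTransGen.refl⟩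

lemma rtg_restrict {b d : V} (h : Relation.ReflTransGen E b d) :
    d ∈ Anc E S →
    Relation.ReflTransGen (fun a b => E a b ∧ a ∈ Anc E S ∧ b ∈ Anc E S) b d := by
  induction h with
  | refl => exact fun _ => Relation.ReflTransGen.refl
  | tail hbc hcd ih =>
      intro hd
      have hc := anc_step hcd hd
      exact (ih hc).tail ⟨hcd, hc, hd⟩

/-- every node of a path whose edge relation forces membership in `A` lies in `A`. -/
lemma path_nodes_mem {A : Set V} (hE : ∀ a b, E a b → a ∈ A ∧ b ∈ A) {i j : V} {p : List V}
    (hp : IsPath E i j p) : ∀ (k : ℕ) x, p[k]? = some x → x ∈ A := by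
  obtain ⟨-, -, hlen, hedge, -⟩ := hp
  intro k x hx
  have hk : k < p.length := (List.getElem?_eq_some_iff.mp hx).1
  by_cases hk1 : k + 1 < p.length
  · have hy : p[k + 1]? = some (p.get ⟨k + 1, hk1⟩) := List.getElem?_eq_getElem hk1
    rcases hedge k x _ hx hy with h | h
    · exact (hE _ _ h).1
    · exact (hE _ _ h).2
  · -- k is the last index; since length ≥ 2, k ≥ 1
    have hk2 : 1 ≤ k := by omega
    obtain ⟨m, rfl⟩ : ∃ m, k = m + 1 := ⟨k - 1, by omega⟩
    have hm : m < p.length := by omega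
    have hw : p[m]? = some (p.get ⟨m, hm⟩) := List.getElem?_eq_getElem hm
    rcases hedge m _ x hw hx with h | h
    · exact (hE _ _ h).2
    · exact (hE _ _ h).1

/-- On an unblocked path, every node is an ancestor of `I ∪ J ∪ Z`. -/
lemma active_mem_anc {I Z J : Set V} {p : List V} {i j : V}
    (hi : i ∈ I) (hj : j ∈ J) (hp : IsPath E i j p)
    (hcol : ∀ k a b c, p[k]? = some a → p[k + 1]? = some b → p[k + 2]? = some c →
      E a b → E c b → ∃ d, Desc E b d ∧ d ∈ Z) :
    ∀ (k : ℕ) x, p[k]? = some x → x ∈ Anc E (I ∪ J ∪ Z) := by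
  obtain ⟨hh, hl, hlen, hedge, -⟩ := hp
  -- the last entry is j
  have hlast : ∀ k x, p[k]? = some x → k + 1 = p.length → x = j := by
    intro k x hx hk
    have : p.getLast? = p[p.length - 1]? := List.getLast?_eq_getElem?
    rw [hl] at this
    have h2 : p[k]? = some j := by rw [show k = p.length - 1 by omega]; exact this.symm
    rw [h2] at hx; exact (Option.some_injective _ hx).symm
  have hfirst : ∀ x, p[0]? = some x → x = i := by
    intro x hx
    rw [← List.head?_eq_getElem?, hh] at hx
    exact Option.some_injective _ hx.symm
  -- R : forward edge gives target in Anc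
  have R : ∀ M k x y, p.length ≤ k + 2 + M → p[k]? = some x → p[k + 1]? = some y →
      E x y → y ∈ Anc E (I ∪ J ∪ Z) := by
    intro M
    induction M with
    | zero =>
        intro k x y hM hx hy hxy
        have hk1 : k + 1 < p.length := (List.getElem?_eq_some_iff.mp hy).1
        have : y = j := hlast (k + 1) y hy (by omega)
        subst this
        exact mem_anc_self (Or.inl (Or.inr hj))
    | succ M ih =>
        intro k x y hM hx hy hxy
        by_cases h2 : k + 2 < p.length
        · have hz : p[k + 2]? = some (p.get ⟨k + 2, h2⟩) := List.getElem?_eq_getElem h2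
          set z := p.get ⟨k + 2, h2⟩ with hzdef
          rcases hedge (k + 1) y z hy hz with h | h
          · exact anc_step h (ih (k + 1) y z (by omega) hy hz h)
          · obtain ⟨d, hd, hdZ⟩ := hcol k x y z hx hy hz hxy h
            exact ⟨d, Or.inr hdZ, hd⟩
        · have hk1 : k + 1 < p.length := (List.getElem?_eq_some_iff.mp hy).1
          have : y = j := hlast (k + 1) y hy (by omega)
          subst this
          exact mem_anc_self (Or.inl (Or.inr hj))
  -- L : backward edge gives target in Anc
  have L : ∀ k x y, p[k]? = some y → p[k + 1]? = some x →
      E x y → y ∈ Anc E (I ∪ J ∪ Z) := by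
    intro k
    induction k using Nat.strong_induction_on with
    | _ k ih =>
        intro x y hy hx hxy
        match k, ih with
        | 0, _ =>
            have : y = i := hfirst y hy
            subst this
            exact mem_anc_self (Or.inl (Or.inl hi))
        | m + 1, ih =>
            have hm : m < p.length := by
              have := (List.getElem?_eq_some_iff.mp hy).1; omega
            have hw : p[m]? = some (p.get ⟨m, hm⟩) := List.getElem?_eq_getElem hm
            set w := p.get ⟨m, hm⟩ with hwdef
            rcases hedge m w y hw hy with h | h
            · obtain ⟨d, hd, hdZ⟩ := hcol m w y x hw hy hx h hxy
              exact ⟨d, Or.inr hdZ, hd⟩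
            · exact anc_step h (ih m (by omega) y w hw hy h)
  -- main claim
  intro k x hx
  have hk : k < p.length := (List.getElem?_eq_some_iff.mp hx).1
  match k with
  | 0 =>
      have : x = i := hfirst x hx
      subst this
      exact mem_anc_self (Or.inl (Or.inl hi))
  | m + 1 =>
      by_cases h1 : m + 2 < p.length
      · have hc : p[m + 2]? = some (p.get ⟨m + 2, h1⟩) := List.getElem?_eq_getElem h1
        set c := p.get ⟨m + 2, h1⟩ with hcdef
        have ha : p[m]? = some (p.get ⟨m, by omega⟩) := List.getElem?_eq_getElem (by omega)
        set a := p.get ⟨m, by omega⟩ with hadef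
        rcases hedge (m + 1) x c hx hc with hxc | hcx
        · exact anc_step hxc (R p.length (m + 1) x c (by omega) hx hc hxc)
        · rcases hedge m a x ha hx with hax | hxa
          · obtain ⟨d, hd, hdZ⟩ := hcol m a x c ha hx hc hax hcx
            exact ⟨d, Or.inr hdZ, hd⟩
          · exact anc_step hxa (L m x a ha hx hxa)
      · exact (hlast (m + 1) x hx (by omega)) ▸ mem_anc_self (Or.inl (Or.inr hj))

end Aux

/-- `V_Z` d-separates `V_I` and `V_J` in `G` iff it does so in the
restriction of `G` to the ancestors of `V_I ∪ V_J ∪ V_Z`. -/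
theorem dsep_iff_dsep_restrict_anc {V : Type*} (E : V → V → Prop) (I Z J : Set V)
    (hIZ : Disjoint I Z) (hIJ : Disjoint I J) (hJZ : Disjoint J Z) :
    DSep E I Z J ↔
      DSep (fun a b => E a b ∧ a ∈ Anc E (I ∪ J ∪ Z) ∧ b ∈ Anc E (I ∪ J ∪ Z)) I Z J := by
  set A := Anc E (I ∪ J ∪ Z) with hA
  set E' := fun a b => E a b ∧ a ∈ A ∧ b ∈ A with hE'
  constructor
  · -- forward : dsep in G → dsep in G'
    intro hD i hi j hj p hp'
    -- p is a path in E
    obtain ⟨hh, hl, hlen, hedge, hnd⟩ := hp'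
    have hp : IsPath E i j p :=
      ⟨hh, hl, hlen, fun k a b ha hb => (hedge k a b ha hb).imp And.left And.left, hnd⟩
    have hmem : ∀ k x, p[k]? = some x → x ∈ A :=
      path_nodes_mem (fun a b h => ⟨h.2.1, h.2.2⟩) ⟨hh, hl, hlen, hedge, hnd⟩
    obtain ⟨k, a, b, c, ha, hb, hc, hblk⟩ := hD i hi j hj p hp
    refine ⟨k, a, b, c, ha, hb, hc, ?_⟩
    rcases hblk with ⟨hbZ, hncol⟩ | ⟨⟨hab, hcb⟩, hdesc⟩
    · exact Or.inl ⟨hbZ, fun ⟨h1, h2⟩ => hncol ⟨h1.1, h2.1⟩⟩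
    · refine Or.inr ⟨⟨⟨hab, hmem k a ha, hmem (k + 1) b hb⟩,
        ⟨hcb, hmem (k + 2) c hc, hmem (k + 1) b hb⟩⟩, fun d hd => ?_⟩
      exact hdesc d (Relation.ReflTransGen.mono (fun x y (h : E' x y) => h.1) _ _ hd)
  · -- backward : dsep in G' → dsep in G
    intro hD i hi j hj p hp
    by_contra hNB
    have hcol : ∀ k a b c, p[k]? = some a → p[k + 1]? = some b →
        p[k + 2]? = some c → E a b → E c b → ∃ d, Desc E b d ∧ d ∈ Z := by
      intro k a b c ha hb hc hab hcb
      by_contra h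
      push_neg at h
      exact hNB ⟨k, a, b, c, ha, hb, hc, Or.inr ⟨⟨hab, hcb⟩, fun d hd hdZ => h d hd hdZ⟩⟩
    have hmem : ∀ k x, p[k]? = some x → x ∈ A := active_mem_anc hi hj hp hcol
    obtain ⟨hh, hl, hlen, hedge, hnd⟩ := hp
    have hp' : IsPath E' i j p := by
      refine ⟨hh, hl, hlen, fun k a b ha hb => ?_, hnd⟩
      rcases hedge k a b ha hb with h | h
      · exact Or.inl ⟨h, hmem k a ha, hmem (k + 1) b hb⟩
      · exact Or.inr ⟨h, hmem (k + 1) b hb, hmem k a ha⟩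
    obtain ⟨k, a, b, c, ha, hb, hc, hblk⟩ := hD i hi j hj p hp'
    apply hNB
    refine ⟨k, a, b, c, ha, hb, hc, ?_⟩
    rcases hblk with ⟨hbZ, hncol⟩ | ⟨⟨hab, hcb⟩, hdesc⟩
    · refine Or.inl ⟨hbZ, fun ⟨h1, h2⟩ => hncol ⟨⟨h1, hmem k a ha, hmem (k + 1) b hb⟩,
        ⟨h2, hmem (k + 2) c hc, hmem (k + 1) b hb⟩⟩⟩
    · refine Or.inr ⟨⟨hab.1, hcb.1⟩, fun d hd hdZ => ?_⟩
      exact hdesc d (rtg_restrict hd (mem_anc_self (Or.inr hdZ))) hdZ
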